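/- arXiv:0905.0813 — 2 statements merged into one kernel-verified Lean document; each statement's English description precedes it below -/
import Mathlib

section
/- With P_k defined by P_0 = 1, P_k = -Σ_{j=1}^{k}(j+1) c_j P_{k-j}, and the Kirillov operators L_k = ∂_k + Σ_{m≥1}(m+1) c_m ∂_{k+m}, one has L_k P_n = (n - 2k - 1) P_{n-k} for n ≥ k ≥ 1, and L_k P_n = 0 for n < k. -/
/-- The polynomials `P_k ∈ ℤ[c_1, c_2, ...]` defined by `P_0 = 1` and
`P_k = -Σ_{j=1}^{k} (j+1) c_j P_{k-j}`. -/
noncomputable def Ppoly : ℕ → MvPolynomial ℕ ℤ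
  | 0 => 1
  | (k + 1) => -∑ j ∈ Finset.range (k + 1),
      ((j : ℤ) + 2) • (MvPolynomial.X (j + 1) * Ppoly (k - j))
  termination_by k => k
  decreasing_by omega

/-- The Kirillov operator `L_k = ∂_k + Σ_{m≥1} (m+1) c_m ∂_{k+m}` acting on
`ℤ[c_1, c_2, ...]`. -/
noncomputable def kirillovL (k : ℕ) (p : MvPolynomial ℕ ℤ) : MvPolynomial ℕ ℤ :=
  MvPolynomial.pderiv k p +
    ∑ᶠ m : ℕ, if 1 ≤ m then ((m : ℤ) + 1) • (MvPolynomial.X m * MvPolynomial.pderiv (k + m) p)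
      else 0

open MvPolynomial Finset

lemma Ppoly_succ (k : ℕ) : Ppoly (k+1) = -∑ j ∈ Finset.range (k + 1),
      ((j : ℤ) + 2) • (MvPolynomial.X (j + 1) * (Ppoly (k - j))) := by rw [Ppoly]

/-- variables bound -/
lemma pderiv_Ppoly (n : ℕ) : ∀ j, n < j → MvPolynomial.pderiv j (Ppoly n) = 0 := by
  induction n using Nat.strong_induction_on with
  | _ n IH =>
    match n with
    | 0 => intro j hj; simp [Ppoly, pderiv_one]
    | (t+1) =>
      intro j hj
      rw [Ppoly_succ, map_neg, map_sum]
      rw [Finset.sum_eq_zero, neg_zero]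
      intro i hi
      simp only [Finset.mem_range] at hi
      rw [Derivation.map_smul, pderiv_mul, pderiv_X_of_ne (by omega), IH (t - i) (by omega) j (by omega)]
      simp


noncomputable def Fop (k B : ℕ) (p : MvPolynomial ℕ ℤ) : MvPolynomial ℕ ℤ :=
  MvPolynomial.pderiv k p +
    ∑ m ∈ Finset.Icc 1 B, ((m : ℤ) + 1) • (MvPolynomial.X m * MvPolynomial.pderiv (k + m) p)

lemma kirillovL_eq_Fop (k B : ℕ) (p : MvPolynomial ℕ ℤ)
    (h : ∀ j, B < j → MvPolynomial.pderiv j p = 0) :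
    kirillovL k p = Fop k B p := by
  unfold kirillovL Fop
  congr 1
  rw [finsum_eq_sum_of_support_subset _ (s := Finset.Icc 1 B)]
  · exact Finset.sum_congr rfl fun m hm => by
      rw [if_pos (Finset.mem_Icc.mp hm).1]
  · intro m hm
    simp only [Function.mem_support, ne_eq] at hm
    by_contra hmem
    simp only [Finset.coe_Icc, Set.mem_Icc, not_and_or, not_le] at hmem
    apply hm
    rcases hmem with h1 | h2
    · rw [if_neg (by omega)]
    · rw [h (k + m) (by omega)]
      simp

lemma Fop_add (k B : ℕ) (p q : MvPolynomial ℕ ℤ) :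
    Fop k B (p + q) = Fop k B p + Fop k B q := by
  simp only [Fop, map_add, mul_add, smul_add, Finset.sum_add_distrib]; abel

lemma Fop_neg (k B : ℕ) (p : MvPolynomial ℕ ℤ) : Fop k B (-p) = -Fop k B p := by
  simp only [Fop, map_neg, mul_neg, smul_neg, Finset.sum_neg_distrib]; abel

lemma Fop_smul (k B : ℕ) (z : ℤ) (p : MvPolynomial ℕ ℤ) :
    Fop k B (z • p) = z • Fop k B p := by
  simp only [Fop, Derivation.map_smul, smul_add, Finset.smul_sum, mul_smul_comm, smul_comm z]

lemma Fop_sum (k B : ℕ) {ι : Type*} (s : Finset ι) (f : ι → MvPolynomial ℕ ℤ) :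
    Fop k B (∑ i ∈ s, f i) = ∑ i ∈ s, Fop k B (f i) := by
  classical
  induction s using Finset.induction_on with
  | empty => simp [Fop]
  | insert x s hx ih => rw [Finset.sum_insert hx, Fop_add, ih, Finset.sum_insert hx]

lemma Fop_mul (k B : ℕ) (p q : MvPolynomial ℕ ℤ) :
    Fop k B (p * q) = Fop k B p * q + p * Fop k B q := by
  unfold Fop
  rw [pderiv_mul]
  have h : ∑ m ∈ Finset.Icc 1 B, ((m:ℤ)+1) • (MvPolynomial.X m * MvPolynomial.pderiv (k+m) (p*q))
      = ∑ m ∈ Finset.Icc 1 B, (((m:ℤ)+1) • (MvPolynomial.X m * MvPolynomial.pderiv (k+m) p) * q +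
        p * (((m:ℤ)+1) • (MvPolynomial.X m * MvPolynomial.pderiv (k+m) q))) :=
    Finset.sum_congr rfl fun m _ => by rw [pderiv_mul]; simp only [zsmul_eq_mul]; push_cast; ring
  rw [h, Finset.sum_add_distrib, ← Finset.sum_mul, ← Finset.mul_sum]
  ring

lemma Fop_X_of_lt (k B j : ℕ) (hj : j < k) : Fop k B (MvPolynomial.X j) = 0 := by
  rw [Fop, pderiv_X_of_ne (by omega), Finset.sum_eq_zero, add_zero]
  intro m hm
  rw [pderiv_X_of_ne (by simp at hm; omega)]
  simp

lemma Fop_X_self (k B : ℕ) : Fop k B (MvPolynomial.X k) = 1 := by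
  rw [Fop, pderiv_X_self, Finset.sum_eq_zero, add_zero]
  intro m hm
  rw [pderiv_X_of_ne (by simp at hm; omega)]
  simp

lemma Fop_X_add (k B d : ℕ) (hd1 : 1 ≤ d) (hdB : d ≤ B) :
    Fop k B (MvPolynomial.X (k + d)) = ((d : ℤ) + 1) • MvPolynomial.X d := by
  rw [Fop, pderiv_X_of_ne (by omega)]
  rw [Finset.sum_eq_single d]
  · simp
  · intro m hm hne
    rw [pderiv_X_of_ne (by omega)]
    simp
  · intro hd
    exact absurd (Finset.mem_Icc.mpr ⟨hd1, hdB⟩) hd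

lemma kirillovL_Ppoly (l : ℕ) : ∀ n : ℕ, kirillovL (l+1) (Ppoly n) =
    if l+1 ≤ n then ((n:ℤ) - 2*(l+1) - 1) • Ppoly (n-(l+1)) else 0 := by
  intro n
  induction n using Nat.strong_induction_on with
  | _ n IH =>
    match n with
    | 0 =>
      rw [if_neg (by omega), kirillovL_eq_Fop _ 0 _ (fun j hj => by simp [Ppoly, pderiv_one])]
      simp [Fop, Ppoly, pderiv_one]
    | (m+1) =>
      rw [kirillovL_eq_Fop _ (m+1) _ (pderiv_Ppoly (m+1))]
      rw [Ppoly_succ, Fop_neg, Fop_sum]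
      have hterm : ∀ i ∈ Finset.range (m+1),
          Fop (l+1) (m+1) (((i:ℤ)+2) • (MvPolynomial.X (i+1) * Ppoly (m-i))) =
          (if i = l then ((i:ℤ)+2) • Ppoly (m-i) else 0)
          + (if l < i then (((i:ℤ)+2) * (((i-l : ℕ):ℤ)+1)) •
              (MvPolynomial.X (i-l) * Ppoly (m-i)) else 0)
          + (if i+l+1 ≤ m then ((i:ℤ)+2) •
              (MvPolynomial.X (i+1) * (((m:ℤ)-(i:ℤ)-2*(l+1)-1) • Ppoly (m-l-1-i))) else 0) := by
        intro i hi
        simp only [Finset.mem_range] at hi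
        rw [Fop_smul, Fop_mul]
        have hPP : Fop (l+1) (m+1) (Ppoly (m-i)) =
            if i+l+1 ≤ m then ((m:ℤ)-(i:ℤ)-2*(l+1)-1) • Ppoly (m-l-1-i) else 0 := by
          rw [← kirillovL_eq_Fop _ (m+1) _ (fun j hj => pderiv_Ppoly (m-i) j (by omega)),
            IH (m-i) (by omega)]
          by_cases hc : i+l+1 ≤ m
          · rw [if_pos (by omega), if_pos hc]
            have h1 : m-i-(l+1) = m-l-1-i := by omega
            have h2 : ((m-i : ℕ) : ℤ) = (m:ℤ) - (i:ℤ) := by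
              rw [Nat.cast_sub (by omega)]
            rw [h1, h2]
          · rw [if_neg (by omega), if_neg hc]
        rw [hPP]
        rcases lt_trichotomy i l with h | h | h
        · rw [Fop_X_of_lt _ _ _ (by omega)]
          simp only [if_neg (show ¬ i = l by omega), if_neg (show ¬ l < i by omega)]
          by_cases hc : i + l + 1 ≤ m
          · simp only [if_pos hc, zsmul_eq_mul]; ring
          · simp only [if_neg hc, zsmul_eq_mul]; ring
        · subst h
          rw [Fop_X_self]
          simp only [if_pos rfl, if_true, if_neg (lt_irrefl i)]
          by_cases hc : i + i + 1 ≤ m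
          · simp only [if_pos hc, if_true, zsmul_eq_mul]; ring
          · simp only [if_neg hc, if_true, zsmul_eq_mul]; ring
        · have hx : (i+1) = (l+1) + (i-l) := by omega
          rw [hx, Fop_X_add _ _ _ (by omega) (by omega), ← hx]
          simp only [if_neg (show ¬ i = l by omega), if_pos h]
          by_cases hc : i + l + 1 ≤ m
          · simp only [if_pos hc, zsmul_eq_mul]; push_cast; ring
          · simp only [if_neg hc, zsmul_eq_mul]; push_cast; ring
      rw [Finset.sum_congr rfl hterm, Finset.sum_add_distrib, Finset.sum_add_distrib]
      have hT1 : (∑ i ∈ Finset.range (m+1), if i = l then ((i:ℤ)+2) • Ppoly (m-i) else 0)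
          = if l ∈ Finset.range (m+1) then ((l:ℤ)+2) • Ppoly (m-l) else 0 :=
        Finset.sum_ite_eq' _ _ _
      have hT2 : (∑ i ∈ Finset.range (m+1), if l < i then (((i:ℤ)+2) * (((i-l:ℕ):ℤ)+1)) •
              (MvPolynomial.X (i-l) * Ppoly (m-i)) else 0)
          = ∑ j ∈ Finset.range (m-l), (((l:ℤ)+(j:ℤ)+3) * ((j:ℤ)+2)) •
              (MvPolynomial.X (j+1) * Ppoly (m-l-1-j)) := by
        rw [← Finset.sum_subset (show Finset.Ico (l+1) (m+1) ⊆ Finset.range (m+1) by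
              intro x hx; simp only [Finset.mem_Ico] at hx; exact Finset.mem_range.mpr hx.2)
            (fun x hx hx2 => by
              simp only [Finset.mem_range] at hx
              simp only [Finset.mem_Ico, not_and, not_lt] at hx2
              rw [if_neg (by omega)])]
        rw [Finset.sum_Ico_eq_sum_range, show m + 1 - (l+1) = m - l by omega]
        refine Finset.sum_congr rfl fun j hj => ?_
        simp only [Finset.mem_range] at hj
        rw [if_pos (by omega), show l + 1 + j - l = j + 1 by omega,
          show m - (l+1+j) = m - l - 1 - j by omega]
        congr 1
        push_cast
        ring
      have hT3 : (∑ i ∈ Finset.range (m+1), if i+l+1 ≤ m then ((i:ℤ)+2) •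
              (MvPolynomial.X (i+1) * (((m:ℤ)-(i:ℤ)-2*(l+1)-1) • Ppoly (m-l-1-i))) else 0)
          = ∑ j ∈ Finset.range (m-l), ((j:ℤ)+2) •
              (MvPolynomial.X (j+1) * (((m:ℤ)-(j:ℤ)-2*(l+1)-1) • Ppoly (m-l-1-j))) := by
        rw [← Finset.sum_subset (show Finset.range (m-l) ⊆ Finset.range (m+1) by
              intro x hx; simp only [Finset.mem_range] at *; omega)
            (fun x hx hx2 => by
              simp only [Finset.mem_range] at hx hx2; rw [if_neg (by omega)])]
        exact Finset.sum_congr rfl fun j hj => by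
          simp only [Finset.mem_range] at hj; rw [if_pos (by omega)]
      have hcomb : (∑ j ∈ Finset.range (m-l), (((l:ℤ)+(j:ℤ)+3) * ((j:ℤ)+2)) •
              (MvPolynomial.X (j+1) * Ppoly (m-l-1-j)))
          + (∑ j ∈ Finset.range (m-l), ((j:ℤ)+2) •
              (MvPolynomial.X (j+1) * (((m:ℤ)-(j:ℤ)-2*(l+1)-1) • Ppoly (m-l-1-j))))
          = ((m:ℤ)-(l:ℤ)) • ∑ j ∈ Finset.range (m-l), ((j:ℤ)+2) •
              (MvPolynomial.X (j+1) * Ppoly (m-l-1-j)) := by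
        rw [← Finset.sum_add_distrib, Finset.smul_sum]
        exact Finset.sum_congr rfl fun j hj => by
          simp only [zsmul_eq_mul]; push_cast; ring
      rw [hT1, hT2, hT3]
      by_cases hlm : l ≤ m
      · have hS : ((m:ℤ)-(l:ℤ)) • (∑ j ∈ Finset.range (m-l), ((j:ℤ)+2) •
              (MvPolynomial.X (j+1) * Ppoly (m-l-1-j)))
            = -(((m:ℤ)-(l:ℤ)) • Ppoly (m-l)) := by
          rcases Nat.lt_or_ge l m with h | h
          · obtain ⟨s, hs⟩ : ∃ s, m - l = s + 1 := ⟨m - l - 1, by omega⟩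
            rw [hs, Nat.add_sub_cancel, Ppoly_succ, smul_neg, neg_neg]
          · have h0 : m - l = 0 := by omega
            have h1 : (m:ℤ) - (l:ℤ) = 0 := by omega
            rw [h0, h1]
            simp
        rw [add_assoc, hcomb, hS, if_pos (Finset.mem_range.mpr (by omega)),
          if_pos (show l+1 ≤ m+1 by omega), Nat.succ_sub_succ]
        simp only [zsmul_eq_mul]
        push_cast
        ring
      · rw [if_neg (show l ∉ Finset.range (m+1) by simp only [Finset.mem_range]; omega),
          if_neg (show ¬ l+1 ≤ m+1 by omega), show m - l = 0 by omega]
        simp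

/-- `L_k P_n = (n - 2k - 1) P_{n-k}` for `n ≥ k ≥ 1`, and `L_k P_n = 0` for `n < k`. -/
theorem kirillov_acts_on_Ppoly :
    (∀ n k : ℕ, 1 ≤ k → k ≤ n →
      kirillovL k (Ppoly n) = ((n : ℤ) - 2 * k - 1) • Ppoly (n - k)) ∧
    (∀ n k : ℕ, 1 ≤ k → n < k → kirillovL k (Ppoly n) = 0) := by
  constructor
  · intro n k hk hkn
    obtain ⟨l, rfl⟩ : ∃ l, k = l + 1 := ⟨k - 1, by omega⟩
    rw [kirillovL_Ppoly, if_pos hkn]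
    push_cast
    ring_nf
  · intro n k hk hnk
    obtain ⟨l, rfl⟩ : ∃ l, k = l + 1 := ⟨k - 1, by omega⟩
    rw [kirillovL_Ppoly, if_neg (by omega)]
end

section
/- Let u_1(t), ..., u_n(t) be complex-valued differentiable functions satisfying the system u̇_k = Σ_{j=1}^{n-k} (j - k) ū_j u_{j+k} for k = 1, ..., n. Then the quantity |u(t)|² = Σ_{k=1}^n |u_k(t)|² is constant in t. -/
open Finset

lemma key_sum (n : ℕ) (v : ℕ → ℂ) :
    ∑ k ∈ Finset.Icc 1 n, (∑ j ∈ Finset.Icc 1 (n - k),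
      ((j : ℂ) - (k : ℂ)) * (starRingEnd ℂ) (v j) * v (j + k)) * (starRingEnd ℂ) (v k) = 0 := by
  have : ∑ k ∈ Finset.Icc 1 n, ∑ j ∈ Finset.Icc 1 (n - k),
      ((j : ℂ) - (k : ℂ)) * (starRingEnd ℂ) (v j) * v (j + k) * (starRingEnd ℂ) (v k) = 0 := by
    rw [Finset.sum_sigma']
    refine Finset.sum_involution (fun p _ => ⟨p.2, p.1⟩) ?_ ?_ ?_ ?_
    · rintro ⟨k, j⟩ hp
      simp only
      rw [Nat.add_comm j k]
      ring
    · rintro ⟨k, j⟩ hp hne heq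
      have : j = k := by
        have := congrArg Sigma.fst heq
        simpa using this
      subst this
      simp at hne
    · rintro ⟨k, j⟩ hp
      simp only [Finset.mem_sigma, Finset.mem_Icc] at hp ⊢
      omega
    · rintro ⟨k, j⟩ hp
      rfl
  rw [← this]
  exact Finset.sum_congr rfl fun k _ => Finset.sum_mul ..

/-- If `u_1(t), ..., u_n(t)` are differentiable complex-valued functions
satisfying `u̇_k = Σ_{j=1}^{n-k} (j - k) ū_j u_{j+k}` for `k = 1, ..., n`, then
`|u(t)|² = Σ_{k=1}^n |u_k(t)|²` is constant in `t`. -/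
theorem velocity_norm_constant (n : ℕ) (u : ℕ → ℝ → ℂ)
    (hdiff : ∀ k, Differentiable ℝ (u k))
    (hode : ∀ t : ℝ, ∀ k ∈ Finset.Icc 1 n, deriv (u k) t =
      ∑ j ∈ Finset.Icc 1 (n - k), ((j : ℂ) - (k : ℂ)) * (starRingEnd ℂ) (u j t) * u (j + k) t) :
    ∀ t s : ℝ,
      ∑ k ∈ Finset.Icc 1 n, Complex.normSq (u k t) =
        ∑ k ∈ Finset.Icc 1 n, Complex.normSq (u k s) := by
  set F : ℝ → ℝ := fun t => ∑ k ∈ Finset.Icc 1 n, Complex.normSq (u k t) with hF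
  have hk : ∀ k (t : ℝ), HasDerivAt (fun t => Complex.normSq (u k t))
      ((deriv (u k) t * (starRingEnd ℂ) (u k t)
        + u k t * (starRingEnd ℂ) (deriv (u k) t)).re) t := by
    intro k t
    have h1 : HasDerivAt (u k) (deriv (u k) t) t := (hdiff k t).hasDerivAt
    have h2 : HasDerivAt (fun t => (starRingEnd ℂ) (u k t))
        ((starRingEnd ℂ) (deriv (u k) t)) t := h1.star
    have h3 := h1.mul h2
    have h4 := (Complex.reCLM.hasFDerivAt.comp_hasDerivAt t h3)
    convert h4 using 2 with t
    · rfl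
    · rfl
    all_goals simp [Complex.mul_conj]
  have hFd : ∀ t, HasDerivAt F 0 t := by
    intro t
    have := HasDerivAt.sum (fun k (_ : k ∈ Finset.Icc 1 n) => hk k t)
    convert this using 1
    · rfl
    · rfl
    · ext x; simp [hF, Finset.sum_apply]
    have hS : ∑ k ∈ Finset.Icc 1 n, deriv (u k) t * (starRingEnd ℂ) (u k t) = 0 := by
      have := key_sum n (fun j => u j t)
      rw [← this]
      exact Finset.sum_congr rfl fun k hk => by rw [hode t k hk]
    have hS' : ∑ k ∈ Finset.Icc 1 n, u k t * (starRingEnd ℂ) (deriv (u k) t) = 0 := by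
      have : ∑ k ∈ Finset.Icc 1 n, u k t * (starRingEnd ℂ) (deriv (u k) t)
          = (starRingEnd ℂ) (∑ k ∈ Finset.Icc 1 n, deriv (u k) t * (starRingEnd ℂ) (u k t)) := by
        rw [map_sum]
        exact Finset.sum_congr rfl fun k _ => by simp [mul_comm]
      rw [this, hS, map_zero]
    calc (0 : ℝ) = (∑ k ∈ Finset.Icc 1 n, (deriv (u k) t * (starRingEnd ℂ) (u k t)
          + u k t * (starRingEnd ℂ) (deriv (u k) t))).re := by rw [Finset.sum_add_distrib, hS, hS']; simp
      _ = _ := by rw [Complex.re_sum]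
  intro t s
  exact is_const_of_deriv_eq_zero (fun x => (hFd x).differentiableAt) (fun x => (hFd x).deriv) t s
end
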